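/- Suppose H1 and H2 hold. Then for x ≥ x₁ large enough (so that q is bounded below on [x,∞) by a q(x) with a > 0, assumption H3), the principal Dirichlet eigenvalue λ₁(x) of the operator u ↦ -(u''/2 - q u') on [x,∞) satisfies λ₁(x) ≥ (max(inf{q(y) : y ≥ x}, 0))²/2. -/

import Mathlib

open MeasureTheory Real Filter

lemma aux_not_integrable {f : ℝ → ℝ} {N : ℝ} (hf : IntegrableOn f (Set.Ici N))
    (h1 : ∀ y ≥ N, 1 ≤ f y) : False := by
  have h2 : IntegrableOn (fun _ => (1:ℝ)) (Set.Ici N) := by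
    refine hf.integrable.mono aestronglyMeasurable_const ?_
    filter_upwards [ae_restrict_mem measurableSet_Ici] with y hy
    simp only [norm_one, Real.norm_eq_abs]
    have := h1 y hy; linarith [le_abs_self (f y)]
  rw [integrableOn_const_iff] at h2
  simp [Real.volume_Ici] at h2

lemma aux_ftc (a b : ℝ) (hab : a ≤ b) (F F' : ℝ → ℝ) (hF : ContinuousOn F (Set.Icc a b))
    (hd : ∀ t ∈ Set.Ioo a b, HasDerivAt F (F' t) t)
    (hi : IntervalIntegrable F' volume a b) :
    ∫ y in a..b, F' y = F b - F a :=
  intervalIntegral.integral_eq_sub_of_hasDeriv_right_of_le hab hF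
    (fun t ht => (hd t ht).hasDerivWithinAt) hi

lemma aux_le_setIntegral (f : ℝ → ℝ) (a N b : ℝ) (hN : a ≤ N) (hb : N ≤ b)
    (hf : IntegrableOn f (Set.Ici a)) (hpos : ∀ y, 0 ≤ f y) :
    ∫ y in N..b, f y ≤ ∫ y in Set.Ici a, f y := by
  rw [intervalIntegral.integral_of_le hb]
  exact setIntegral_mono_set hf (Filter.Eventually.of_forall hpos)
    (HasSubset.Subset.eventuallyLE (fun y hy => le_trans hN (le_of_lt hy.1)))

set_option maxHeartbeats 1000000 in
theorem principal_eigenvalue_lower_bound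
    (q γ : ℝ → ℝ)
    (hq : ContDiff ℝ 1 q)
    (hγ : ∀ y, γ y = 2 * ∫ t in (0:ℝ)..y, q t)
    (H1 : ∫⁻ y in Set.Ioi (0:ℝ),
        ENNReal.ofReal (Real.exp (γ y)) *
          ∫⁻ z in Set.Ioi y, ENNReal.ofReal (Real.exp (-(γ z))) < ⊤)
    (H2a : Tendsto q atTop atTop)
    (H2b : Tendsto (fun t => deriv q t / q t ^ 2) atTop (nhds 0))
    (x : ℝ) (hx : 0 ≤ x)
    (lam : ℝ) (ψ : ℝ → ℝ)
    (hψC2 : ContDiffOn ℝ 2 ψ (Set.Ici x))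
    (hψ0 : ψ x = 0)
    (hψpos : ∀ y > x, 0 < ψ y)
    (hψL2 : IntegrableOn (fun y => ψ y ^ 2 * Real.exp (-(γ y))) (Set.Ici x))
    (heig : ∀ y ≥ x,
        (1 / 2) * deriv (deriv ψ) y - q y * deriv ψ y = -lam * ψ y) :
    (max (sInf (q '' Set.Ici x)) 0) ^ 2 / 2 ≤ lam := by
  classical
  by_contra hcon
  push_neg at hcon
  set m := sInf (q '' Set.Ici x) with hmdef
  set M := max m 0 with hMdef
  set c := M ^ 2 - 2 * lam with hcdef
  have hc0 : 0 < c := by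
    have : lam < M ^ 2 / 2 := hcon
    simp only [hcdef]; linarith
  -- basic continuity
  have hqc : Continuous q := hq.continuous
  have hq'c : Continuous (deriv q) := hq.continuous_deriv le_rfl
  have hγd : ∀ y, HasDerivAt γ (2 * q y) y := by
    intro y
    have hfun : γ = fun y => 2 * ∫ t in (0:ℝ)..y, q t := funext hγ
    rw [hfun]
    exact (intervalIntegral.integral_hasDerivAt_right (hqc.intervalIntegrable _ _)
      (hqc.stronglyMeasurableAtFilter _ _) hqc.continuousAt).const_mul 2
  have hγc : Continuous γ := continuous_iff_continuousAt.mpr (fun y => (hγd y).continuousAt)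
  have hec : Continuous (fun y => Real.exp (-(γ y))) := Real.continuous_exp.comp hγc.neg
  have he2c : Continuous (fun y => Real.exp (-(γ y) / 2)) :=
    Real.continuous_exp.comp (hγc.neg.div_const 2)
  have hψc : ContinuousOn ψ (Set.Ici x) := hψC2.continuousOn
  set g := derivWithin ψ (Set.Ici x) with hgdef
  have hgc : ContinuousOn g (Set.Ici x) :=
    (hψC2.derivWithin (uniqueDiffOn_Ici x) (m := 1) (by norm_num)).continuousOn
  have hd1 : ∀ y, x < y → HasDerivAt ψ (g y) y := by
    intro y hy
    have h1 : DifferentiableWithinAt ℝ ψ (Set.Ici x) y :=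
      (hψC2.differentiableOn (by norm_num)) y (le_of_lt hy)
    exact (h1.hasDerivWithinAt).hasDerivAt (Ici_mem_nhds hy)
  have hd2 : ∀ y, x < y → HasDerivAt g (2 * (q y * g y - lam * ψ y)) y := by
    intro y hy
    have hgC1 : ContDiffOn ℝ 1 g (Set.Ici x) :=
      hψC2.derivWithin (uniqueDiffOn_Ici x) (m := 1) (by norm_num)
    have h2 : DifferentiableWithinAt ℝ g (Set.Ici x) y :=
      (hgC1.differentiableOn (by norm_num)) y (le_of_lt hy)
    have h3 : HasDerivAt g (derivWithin g (Set.Ici x) y) y :=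
      (h2.hasDerivWithinAt).hasDerivAt (Ici_mem_nhds hy)
    have h4 : HasDerivAt g (deriv g y) y := by
      rwa [← derivWithin_of_mem_nhds (f := g) (Ici_mem_nhds hy)]
    have heq : deriv ψ =ᶠ[nhds y] g := by
      filter_upwards [Ioi_mem_nhds hy] with z hz
      rw [hgdef, ← derivWithin_of_mem_nhds (Ici_mem_nhds hz)]
    have h5 : deriv ψ y = g y := by
      rw [hgdef, ← derivWithin_of_mem_nhds (Ici_mem_nhds hy)]
    have h6 := heig y (le_of_lt hy)
    rw [heq.deriv_eq, h5] at h6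
    have h7 : deriv g y = 2 * (q y * g y - lam * ψ y) := by linarith
    rwa [h7] at h4
  have hqd : ∀ y, HasDerivAt q (deriv q y) y :=
    fun y => (hq.differentiable one_ne_zero y).hasDerivAt
  -- transformed function
  set hf := fun y => ψ y * Real.exp (-(γ y) / 2) with hfdef
  set h1f := fun y => (g y - q y * ψ y) * Real.exp (-(γ y) / 2) with h1fdef
  have hexp2 : ∀ y : ℝ, HasDerivAt (fun y => Real.exp (-(γ y) / 2))
      (-(q y) * Real.exp (-(γ y) / 2)) y := by
    intro y
    have := (((hγd y).neg).div_const 2).exp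
    refine this.congr_deriv ?_
    simp only [Pi.neg_apply]; ring
  have hexp1 : ∀ y : ℝ, HasDerivAt (fun y => Real.exp (-(γ y)))
      (-(2 * q y) * Real.exp (-(γ y))) y := by
    intro y
    have := ((hγd y).neg).exp
    refine this.congr_deriv ?_
    simp only [Pi.neg_apply]; ring
  have hdh : ∀ y, x < y → HasDerivAt hf (h1f y) y := by
    intro y hy
    have := (hd1 y hy).mul (hexp2 y)
    rw [hfdef, h1fdef]
    refine this.congr_deriv ?_
    ring
  have hdh1 : ∀ y, x < y →
      HasDerivAt h1f ((q y ^ 2 - deriv q y - 2 * lam) * hf y) y := by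
    intro y hy
    have hinner : HasDerivAt (fun z => g z - q z * ψ z)
        (2 * (q y * g y - lam * ψ y) - (deriv q y * ψ y + q y * g y)) y :=
      (hd2 y hy).sub ((hqd y).mul (hd1 y hy))
    have := hinner.mul (hexp2 y)
    rw [h1fdef, hfdef]
    refine this.congr_deriv ?_
    ring
  have hsq : ∀ y, ψ y ^ 2 * Real.exp (-(γ y)) = hf y ^ 2 := by
    intro y
    rw [hfdef]
    simp only
    rw [mul_pow]
    congr 1
    rw [sq, ← Real.exp_add]
    congr 1
    ring
  have hfpos : ∀ y, x < y → 0 < hf y := by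
    intro y hy
    rw [hfdef]
    exact mul_pos (hψpos y hy) (Real.exp_pos _)
  have hD_eq : ∀ b, ψ b * g b * Real.exp (-(γ b))
      = hf b * h1f b + q b * (ψ b ^ 2 * Real.exp (-(γ b))) := by
    intro b
    rw [hfdef, h1fdef]
    simp only
    have he2 : Real.exp (-(γ b) / 2) * Real.exp (-(γ b) / 2) = Real.exp (-(γ b)) := by
      rw [← Real.exp_add]; congr 1; ring
    linear_combination (q b * ψ b ^ 2 - ψ b * g b) * he2
  -- continuity packaging
  have hcψe : ContinuousOn (fun y => ψ y ^ 2 * Real.exp (-(γ y))) (Set.Ici x) :=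
    (hψc.pow 2).mul hec.continuousOn
  have hcge : ContinuousOn (fun y => g y ^ 2 * Real.exp (-(γ y))) (Set.Ici x) :=
    (hgc.pow 2).mul hec.continuousOn
  have hcψge : ContinuousOn (fun y => ψ y * g y * Real.exp (-(γ y))) (Set.Ici x) :=
    (hψc.mul hgc).mul hec.continuousOn
  have hcqψe : ContinuousOn (fun y => q y * (ψ y ^ 2 * Real.exp (-(γ y)))) (Set.Ici x) :=
    hqc.continuousOn.mul hcψe
  have ii1 : ∀ a b, x ≤ a → a ≤ b →
      IntervalIntegrable (fun y => ψ y ^ 2 * Real.exp (-(γ y))) volume a b :=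
    fun a b ha hab =>
      (hcψe.mono (fun y hy => le_trans ha hy.1)).intervalIntegrable_of_Icc hab
  have ii2 : ∀ a b, x ≤ a → a ≤ b →
      IntervalIntegrable (fun y => g y ^ 2 * Real.exp (-(γ y))) volume a b :=
    fun a b ha hab =>
      (hcge.mono (fun y hy => le_trans ha hy.1)).intervalIntegrable_of_Icc hab
  have ii3 : ∀ a b, x ≤ a → a ≤ b →
      IntervalIntegrable (fun y => ψ y * g y * Real.exp (-(γ y))) volume a b :=
    fun a b ha hab =>
      (hcψge.mono (fun y hy => le_trans ha hy.1)).intervalIntegrable_of_Icc hab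
  have ii4 : ∀ a b, x ≤ a → a ≤ b →
      IntervalIntegrable (fun y => q y * (ψ y ^ 2 * Real.exp (-(γ y)))) volume a b :=
    fun a b ha hab =>
      (hcqψe.mono (fun y hy => le_trans ha hy.1)).intervalIntegrable_of_Icc hab
  -- identity (B)
  have hB : ∀ b, x ≤ b →
      (∫ y in x..b, g y ^ 2 * Real.exp (-(γ y)))
        - 2 * lam * ∫ y in x..b, ψ y ^ 2 * Real.exp (-(γ y))
      = ψ b * g b * Real.exp (-(γ b)) := by
    intro b hb
    have hF : ContinuousOn (fun y => ψ y * g y * Real.exp (-(γ y))) (Set.Icc x b) :=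
      hcψge.mono (fun y hy => hy.1)
    have hder : ∀ t ∈ Set.Ioo x b, HasDerivAt (fun y => ψ y * g y * Real.exp (-(γ y)))
        (g t ^ 2 * Real.exp (-(γ t)) - 2 * lam * (ψ t ^ 2 * Real.exp (-(γ t)))) t := by
      intro t ht
      have := ((hd1 t ht.1).mul (hd2 t ht.1)).mul (hexp1 t)
      refine this.congr_deriv ?_
      simp only [Pi.mul_apply]; ring
    have hint : IntervalIntegrable
        (fun y => g y ^ 2 * Real.exp (-(γ y)) - 2 * lam * (ψ y ^ 2 * Real.exp (-(γ y))))
        volume x b := (ii2 x b le_rfl hb).sub ((ii1 x b le_rfl hb).const_mul (2 * lam))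
    have hftc := aux_ftc x b hb _ _ hF hder hint
    rw [intervalIntegral.integral_sub (ii2 x b le_rfl hb)
      ((ii1 x b le_rfl hb).const_mul (2 * lam)),
      intervalIntegral.integral_const_mul, hψ0] at hftc
    simpa using hftc
  -- identity (A)
  have hA : ∀ b, x ≤ b →
      2 * (∫ y in x..b, ψ y * g y * Real.exp (-(γ y)))
        - 2 * (∫ y in x..b, q y * (ψ y ^ 2 * Real.exp (-(γ y))))
      = ψ b ^ 2 * Real.exp (-(γ b)) := by
    intro b hb
    have hF : ContinuousOn (fun y => ψ y ^ 2 * Real.exp (-(γ y))) (Set.Icc x b) :=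
      hcψe.mono (fun y hy => hy.1)
    have hder : ∀ t ∈ Set.Ioo x b, HasDerivAt (fun y => ψ y ^ 2 * Real.exp (-(γ y)))
        (2 * (ψ t * g t * Real.exp (-(γ t))) - 2 * (q t * (ψ t ^ 2 * Real.exp (-(γ t))))) t := by
      intro t ht
      have := ((hd1 t ht.1).pow 2).mul (hexp1 t)
      refine this.congr_deriv ?_
      simp only [Pi.pow_apply]; ring
    have hint : IntervalIntegrable
        (fun y => 2 * (ψ y * g y * Real.exp (-(γ y))) - 2 * (q y * (ψ y ^ 2 * Real.exp (-(γ y)))))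
        volume x b :=
      ((ii3 x b le_rfl hb).const_mul 2).sub ((ii4 x b le_rfl hb).const_mul 2)
    have hftc := aux_ftc x b hb _ _ hF hder hint
    rw [intervalIntegral.integral_sub ((ii3 x b le_rfl hb).const_mul 2)
      ((ii4 x b le_rfl hb).const_mul 2),
      intervalIntegral.integral_const_mul, intervalIntegral.integral_const_mul, hψ0] at hftc
    simpa using hftc
  -- lower bound on q by M
  have hbdd : BddBelow (q '' Set.Ici x) := by
    obtain ⟨Nq, hNq⟩ := eventually_atTop.mp (H2a.eventually_ge_atTop 0)
    obtain ⟨C, hC⟩ := (isCompact_Icc (a := x) (b := Nq)).bddBelow_image hqc.continuousOn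
    refine ⟨min C 0, ?_⟩
    rintro _ ⟨y, hy, rfl⟩
    rcases le_total y Nq with h1 | h1
    · exact le_trans (min_le_left _ _) (hC ⟨_, ⟨hy, h1⟩, rfl⟩)
    · exact le_trans (min_le_right _ _) (hNq y h1)
  -- key inequality M² I ≤ J
  have hMJ : ∀ b, x ≤ b →
      M ^ 2 * (∫ y in x..b, ψ y ^ 2 * Real.exp (-(γ y)))
        ≤ ∫ y in x..b, g y ^ 2 * Real.exp (-(γ y)) := by
    intro b hb
    rcases le_or_gt m 0 with hMc | hMc
    · have hMz : M = 0 := by rw [hMdef]; exact max_eq_right hMc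
      rw [hMz]
      have : 0 ≤ ∫ y in x..b, g y ^ 2 * Real.exp (-(γ y)) :=
        intervalIntegral.integral_nonneg hb (fun u hu => by positivity)
      nlinarith
    · have hm0 : m = M := by rw [hMdef]; exact (max_eq_left hMc.le).symm
      have hM0 : 0 < M := by rw [← hm0]; exact hMc
      have hqM : ∀ y, x ≤ y → M ≤ q y := by
        intro y hy
        rw [← hm0]
        exact csInf_le hbdd ⟨y, hy, rfl⟩
      have s1ptw : ∀ y ∈ Set.Icc x b,
          (2 * M) * (ψ y ^ 2 * Real.exp (-(γ y)))
            ≤ 2 * (q y * (ψ y ^ 2 * Real.exp (-(γ y)))) := by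
        intro y hy
        have hq1 := hqM y hy.1
        nlinarith [Real.exp_pos (-(γ y)), sq_nonneg (ψ y),
          mul_nonneg (sq_nonneg (ψ y)) (Real.exp_pos (-(γ y))).le]
      have s1 := intervalIntegral.integral_mono_on hb
        ((ii1 x b le_rfl hb).const_mul (2 * M)) ((ii4 x b le_rfl hb).const_mul 2) s1ptw
      rw [intervalIntegral.integral_const_mul, intervalIntegral.integral_const_mul] at s1
      have s3ptw : ∀ y ∈ Set.Icc x b,
          2 * (ψ y * g y * Real.exp (-(γ y)))
            ≤ (1 / M) * (g y ^ 2 * Real.exp (-(γ y))) + M * (ψ y ^ 2 * Real.exp (-(γ y))) := by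
        intro y hy
        rw [← sub_nonneg]
        have hMne : M ≠ 0 := ne_of_gt hM0
        have hexpand : (1 / M) * (g y ^ 2 * Real.exp (-(γ y)))
            + M * (ψ y ^ 2 * Real.exp (-(γ y))) - 2 * (ψ y * g y * Real.exp (-(γ y)))
            = (1 / M) * ((g y - M * ψ y) ^ 2 * Real.exp (-(γ y))) := by
          field_simp
          ring
        rw [hexpand]
        exact mul_nonneg (one_div_nonneg.mpr hM0.le)
          (mul_nonneg (sq_nonneg _) (Real.exp_pos _).le)
      have s3 := intervalIntegral.integral_mono_on hb
        ((ii3 x b le_rfl hb).const_mul 2)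
        (((ii2 x b le_rfl hb).const_mul (1 / M)).add ((ii1 x b le_rfl hb).const_mul M)) s3ptw
      rw [intervalIntegral.integral_const_mul,
        intervalIntegral.integral_add ((ii2 x b le_rfl hb).const_mul (1 / M))
          ((ii1 x b le_rfl hb).const_mul M),
        intervalIntegral.integral_const_mul, intervalIntegral.integral_const_mul] at s3
      have hAb := hA b hb
      have hEnn : 0 ≤ ψ b ^ 2 * Real.exp (-(γ b)) := by positivity
      have hMI : M * (∫ y in x..b, ψ y ^ 2 * Real.exp (-(γ y)))
          ≤ (1 / M) * ∫ y in x..b, g y ^ 2 * Real.exp (-(γ y)) := by linarith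
      have := mul_le_mul_of_nonneg_left hMI hM0.le
      rw [← mul_assoc, ← mul_assoc, mul_one_div_cancel (ne_of_gt hM0), one_mul] at this
      nlinarith [this]
  have hkey : ∀ b, x ≤ b →
      c * (∫ y in x..b, ψ y ^ 2 * Real.exp (-(γ y)))
        ≤ ψ b * g b * Real.exp (-(γ b)) := by
    intro b hb
    rw [hcdef]
    nlinarith [hB b hb, hMJ b hb]
  -- positivity and monotonicity of I
  have hI0 : 0 < ∫ y in x..(x + 1), ψ y ^ 2 * Real.exp (-(γ y)) := by
    refine intervalIntegral.intervalIntegral_pos_of_pos_on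
      (ii1 x (x + 1) le_rfl (by linarith)) (fun y hy => ?_) (by linarith)
    have := hψpos y hy.1
    positivity
  have hImono : ∀ b, x + 1 ≤ b →
      (∫ y in x..(x + 1), ψ y ^ 2 * Real.exp (-(γ y)))
        ≤ ∫ y in x..b, ψ y ^ 2 * Real.exp (-(γ y)) := by
    intro b hb
    have hsp := intervalIntegral.integral_add_adjacent_intervals
      (ii1 x (x + 1) le_rfl (by linarith)) (ii1 (x + 1) b (by linarith) hb)
    have hnn : 0 ≤ ∫ y in (x + 1)..b, ψ y ^ 2 * Real.exp (-(γ y)) :=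
      intervalIntegral.integral_nonneg hb (fun u hu => by positivity)
    linarith
  -- choice of Y₀
  obtain ⟨Y₀, hY₀x, hY₀⟩ : ∃ Y₀, x + 1 < Y₀ ∧ ∀ y, Y₀ ≤ y →
      2 + 2 * |lam| ≤ q y ∧ deriv q y ≤ q y ^ 2 / 2 := by
    have hEa : ∀ᶠ y in atTop, 2 + 2 * |lam| ≤ q y := H2a.eventually_ge_atTop _
    have hEb : ∀ᶠ y in atTop, |deriv q y / q y ^ 2 - 0| < 1 / 2 :=
      H2b.eventually (eventually_abs_sub_lt 0 (by norm_num))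
    obtain ⟨Y, hY⟩ := eventually_atTop.mp (hEa.and hEb)
    refine ⟨max Y (x + 2), lt_of_lt_of_le (by linarith) (le_max_right _ _), fun y hy => ?_⟩
    obtain ⟨h1, h2⟩ := hY y (le_trans (le_max_left _ _) hy)
    refine ⟨h1, ?_⟩
    rw [sub_zero, abs_lt] at h2
    have hq0 : 0 < q y := by nlinarith [abs_nonneg lam]
    have hq2 : 0 < q y ^ 2 := by positivity
    have h3 : deriv q y / q y ^ 2 < 1 / 2 := h2.2
    rw [div_lt_iff₀ hq2] at h3
    linarith
  have hR1 : ∀ y, Y₀ ≤ y → 1 ≤ q y ^ 2 - deriv q y - 2 * lam := by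
    intro y hy
    obtain ⟨h1, h2⟩ := hY₀ y hy
    nlinarith [le_abs_self lam, abs_nonneg lam, sq_nonneg (q y - (2 + 2 * |lam|)),
      sq_nonneg lam]
  have hq2R : ∀ y, Y₀ ≤ y →
      q y ^ 2 + 1 ≤ 2 * (q y ^ 2 - deriv q y - 2 * lam) + 4 * lam + 1 := by
    intro y hy
    obtain ⟨h1, h2⟩ := hY₀ y hy
    linarith
  have hq1 : ∀ y, Y₀ ≤ y → 1 ≤ q y := by
    intro y hy
    obtain ⟨h1, _⟩ := hY₀ y hy
    nlinarith [abs_nonneg lam]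
  -- h1f is negative beyond Y₀ + 1
  have hneg : ∀ y₁, Y₀ + 1 ≤ y₁ → h1f y₁ < 0 := by
    intro y₁ hy₁
    have hxy₁ : x < y₁ := by linarith
    by_contra hcon2
    push_neg at hcon2
    have hmono : StrictMonoOn h1f (Set.Ici y₁) := by
      refine strictMonoOn_of_deriv_pos (convex_Ici y₁)
        (fun y hy => (hdh1 y (lt_of_lt_of_le hxy₁ (Set.mem_Ici.mp hy))).continuousAt.continuousWithinAt) ?_
      intro y hy
      rw [interior_Ici] at hy
      have hyy : y₁ < y := Set.mem_Ioi.mp hy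
      rw [(hdh1 y (by linarith)).deriv]
      have hRy : 1 ≤ q y ^ 2 - deriv q y - 2 * lam := hR1 y (by linarith)
      exact mul_pos (by linarith) (hfpos y (by linarith))
    have hδ : 0 < h1f (y₁ + 1) :=
      lt_of_le_of_lt hcon2 (hmono Set.self_mem_Ici (Set.mem_Ici.mpr (by linarith)) (by linarith))
    have hlb : ∀ y, y₁ + 1 ≤ y → h1f (y₁ + 1) ≤ h1f y := by
      intro y hy
      rcases eq_or_lt_of_le hy with rfl | hlt
      · exact le_rfl
      · exact le_of_lt (hmono (Set.mem_Ici.mpr (by linarith)) (Set.mem_Ici.mpr (by linarith)) hlt)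
    set δ := h1f (y₁ + 1) with hδdef
    have hφ : MonotoneOn (fun y => hf y - δ * y) (Set.Ici (y₁ + 1)) := by
      refine monotoneOn_of_deriv_nonneg (convex_Ici _) ?_ ?_ ?_
      · intro y hy
        have hyy := Set.mem_Ici.mp hy
        exact ((hdh y (by linarith)).sub ((hasDerivAt_id y).const_mul δ)).continuousAt.continuousWithinAt
      · intro y hy
        rw [interior_Ici] at hy
        have hyy := Set.mem_Ioi.mp hy
        exact ((hdh y (by linarith)).sub ((hasDerivAt_id y).const_mul δ)).differentiableAt.differentiableWithinAt
      · intro y hy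
        rw [interior_Ici] at hy
        have hyy := Set.mem_Ioi.mp hy
        have hd' : HasDerivAt (fun y => hf y - δ * y) (h1f y - δ * 1) y :=
          (hdh y (by linarith)).sub ((hasDerivAt_id y).const_mul δ)
        rw [hd'.deriv]
        have := hlb y hyy.le
        simp only [mul_one]
        linarith
    have hgrow : ∀ y, y₁ + 1 ≤ y → hf (y₁ + 1) - δ * (y₁ + 1) + δ * y ≤ hf y := by
      intro y hy
      have := hφ Set.self_mem_Ici (Set.mem_Ici.mpr hy) hy
      simp only at this
      linarith
    set A := hf (y₁ + 1) - δ * (y₁ + 1) with hAdef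
    set N₁ := max (y₁ + 1) ((1 - A) / δ) with hN₁def
    have hge1 : ∀ y, y ≥ N₁ → 1 ≤ ψ y ^ 2 * Real.exp (-(γ y)) := by
      intro y hy
      have h1' := hgrow y (le_trans (le_max_left _ _) hy)
      have h2' : (1 - A) / δ ≤ y := le_trans (le_max_right _ _) hy
      rw [div_le_iff₀ hδ] at h2'
      have hhf : 1 ≤ hf y := by nlinarith
      rw [hsq y]
      nlinarith
    refine aux_not_integrable (hψL2.mono_set (Set.Ici_subset_Ici.mpr ?_)) hge1
    calc x ≤ y₁ + 1 := by linarith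
    _ ≤ N₁ := le_max_left _ _
  -- final contradiction
  set N := max (x + 1) (Y₀ + 1) with hNdef
  set ε := c * ∫ y in x..(x + 1), ψ y ^ 2 * Real.exp (-(γ y)) with hεdef
  have hε : 0 < ε := mul_pos hc0 hI0
  have hxN : x < N := lt_of_lt_of_le (by linarith) (le_max_left _ _)
  have hY₀N : Y₀ + 1 ≤ N := le_max_right _ _
  have hCN0 : 0 < -(hf N * h1f N) := by
    nlinarith [mul_neg_of_pos_of_neg (hfpos N hxN) (hneg N hY₀N)]
  have hCI0 : 0 ≤ ∫ y in Set.Ici x, ψ y ^ 2 * Real.exp (-(γ y)) :=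
    setIntegral_nonneg measurableSet_Ici (fun y hy => by positivity)
  set CN := -(hf N * h1f N) with hCNdef
  set CI := ∫ y in Set.Ici x, ψ y ^ 2 * Real.exp (-(γ y)) with hCIdef
  have hsmall : ∃ b, N ≤ b ∧ (q b ^ 2 + 1) * (ψ b ^ 2 * Real.exp (-(γ b))) < ε := by
    by_contra hcon3
    push_neg at hcon3
    have hball : ∀ b, N ≤ b → ε * (b - N) ≤ 2 * CN + |4 * lam + 1| * CI := by
      intro b hb
      have hsub : Set.Icc N b ⊆ Set.Ici x := fun y hy => le_trans hxN.le hy.1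
      have hcR : Continuous (fun y => q y ^ 2 - deriv q y - 2 * lam) :=
        ((hqc.pow 2).sub hq'c).sub continuous_const
      have hch1 : ContinuousOn h1f (Set.Ici x) := by
        rw [h1fdef]
        exact (hgc.sub (hqc.continuousOn.mul hψc)).mul he2c.continuousOn
      have hint1 : IntervalIntegrable (fun y => h1f y ^ 2) volume N b :=
        ((hch1.pow 2).mono hsub).intervalIntegrable_of_Icc hb
      have hint2 : IntervalIntegrable
          (fun y => (q y ^ 2 - deriv q y - 2 * lam) * (ψ y ^ 2 * Real.exp (-(γ y)))) volume N b :=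
        ((hcR.continuousOn.mul hcψe).mono hsub).intervalIntegrable_of_Icc hb
      have hFcont : ContinuousOn (fun y => hf y * h1f y) (Set.Icc N b) := by
        rw [hfdef]
        exact ((hψc.mul he2c.continuousOn).mul hch1).mono hsub
      have hder : ∀ t ∈ Set.Ioo N b, HasDerivAt (fun y => hf y * h1f y)
          (h1f t ^ 2 + (q t ^ 2 - deriv q t - 2 * lam) * (ψ t ^ 2 * Real.exp (-(γ t)))) t := by
        intro t ht
        have hxt : x < t := lt_trans hxN ht.1
        have := (hdh t hxt).mul (hdh1 t hxt)
        refine this.congr_deriv ?_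
        rw [hsq t]
        ring
      have hftc := aux_ftc N b hb _ _ hFcont hder (hint1.add hint2)
      rw [intervalIntegral.integral_add hint1 hint2] at hftc
      have hRint : (∫ y in N..b, (q y ^ 2 - deriv q y - 2 * lam) * (ψ y ^ 2 * Real.exp (-(γ y)))) ≤ CN := by
        have hnn : 0 ≤ ∫ y in N..b, h1f y ^ 2 :=
          intervalIntegral.integral_nonneg hb (fun u hu => sq_nonneg _)
        have hend : hf b * h1f b ≤ 0 :=
          le_of_lt (mul_neg_of_pos_of_neg (hfpos b (lt_of_lt_of_le hxN hb))
            (hneg b (le_trans hY₀N hb)))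
        rw [hCNdef]
        linarith [hftc]
      have hintq : IntervalIntegrable
          (fun y => (q y ^ 2 + 1) * (ψ y ^ 2 * Real.exp (-(γ y)))) volume N b :=
        (((((hqc.pow 2).add continuous_const).continuousOn.mul hcψe)).mono hsub).intervalIntegrable_of_Icc hb
      have hmono1 : (∫ y in N..b, ε) ≤ ∫ y in N..b, (q y ^ 2 + 1) * (ψ y ^ 2 * Real.exp (-(γ y))) := by
        refine intervalIntegral.integral_mono_on hb intervalIntegrable_const hintq ?_
        intro y hy
        exact hcon3 y hy.1
      have hmono2 : (∫ y in N..b, (q y ^ 2 + 1) * (ψ y ^ 2 * Real.exp (-(γ y))))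
          ≤ ∫ y in N..b, (2 * ((q y ^ 2 - deriv q y - 2 * lam) * (ψ y ^ 2 * Real.exp (-(γ y))))
              + (4 * lam + 1) * (ψ y ^ 2 * Real.exp (-(γ y)))) := by
        refine intervalIntegral.integral_mono_on hb hintq
          ((hint2.const_mul 2).add ((ii1 N b hxN.le hb).const_mul (4 * lam + 1))) ?_
        intro y hy
        have h1' := hq2R y (le_trans (by linarith [hY₀N] : Y₀ ≤ N) hy.1)
        have hnn : 0 ≤ ψ y ^ 2 * Real.exp (-(γ y)) := by positivity
        nlinarith
      rw [intervalIntegral.integral_add (hint2.const_mul 2)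
        ((ii1 N b hxN.le hb).const_mul (4 * lam + 1)),
        intervalIntegral.integral_const_mul, intervalIntegral.integral_const_mul] at hmono2
      have hIb1 : (∫ y in N..b, ψ y ^ 2 * Real.exp (-(γ y))) ≤ CI :=
        aux_le_setIntegral _ x N b hxN.le hb hψL2 (fun y => by positivity)
      have hIb0 : 0 ≤ ∫ y in N..b, ψ y ^ 2 * Real.exp (-(γ y)) :=
        intervalIntegral.integral_nonneg hb (fun u hu => by positivity)
      have habs : (4 * lam + 1) * (∫ y in N..b, ψ y ^ 2 * Real.exp (-(γ y))) ≤ |4 * lam + 1| * CI := by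
        have h1' := mul_le_mul_of_nonneg_right (le_abs_self (4 * lam + 1)) hIb0
        have h2' := mul_le_mul_of_nonneg_left hIb1 (abs_nonneg (4 * lam + 1))
        linarith
      rw [intervalIntegral.integral_const, smul_eq_mul] at hmono1
      nlinarith [hRint, hmono1, hmono2, habs]
    have hX : 0 < 2 * CN + |4 * lam + 1| * CI + 1 := by
      nlinarith [mul_nonneg (abs_nonneg (4 * lam + 1)) hCI0]
    have hfinal := hball (N + (2 * CN + |4 * lam + 1| * CI + 1) / ε)
      (le_add_of_nonneg_right (div_nonneg hX.le hε.le))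
    rw [add_sub_cancel_left, mul_comm, div_mul_cancel₀ _ (ne_of_gt hε)] at hfinal
    linarith
  obtain ⟨b, hbN, hblt⟩ := hsmall
  have hxb : x ≤ b := le_trans hxN.le hbN
  have h1 := hkey b hxb
  have h2 : ψ b * g b * Real.exp (-(γ b)) ≤ (q b ^ 2 + 1) * (ψ b ^ 2 * Real.exp (-(γ b))) := by
    rw [hD_eq b]
    have hfb := hfpos b (lt_of_lt_of_le hxN hbN)
    have h1fb := hneg b (le_trans hY₀N hbN)
    have hq1b : 1 ≤ q b := hq1 b (by linarith [le_trans hY₀N hbN])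
    have hnn : 0 ≤ ψ b ^ 2 * Real.exp (-(γ b)) := by positivity
    have hq2b : 0 ≤ (q b ^ 2 + 1 - q b) * (ψ b ^ 2 * Real.exp (-(γ b))) :=
      mul_nonneg (by nlinarith [sq_nonneg (q b - 1)]) hnn
    nlinarith [mul_neg_of_pos_of_neg hfb h1fb]
  have h3 : ε ≤ c * ∫ y in x..b, ψ y ^ 2 * Real.exp (-(γ y)) := by
    rw [hεdef]
    exact mul_le_mul_of_nonneg_left (hImono b (le_trans (le_max_left _ _) hbN)) hc0.le
  linarith
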